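/- On the Heisenberg Lie algebra with bracket [e₁,e₃] = e₂ and product e₁∘e₁ = e₂, e₃∘e₃ = e₃, the curvature R(u,v)w := (1/2)(L(u,v,w) - L(v,u,w)) of the canonical connection is non-zero (R(e₁,e₃)e₃ = (1/2)e₂), and for all u,v ∈ g the endomorphism R(u,v) is a scalar multiple of the single endomorphism J defined by J(e₃) = e₂, J(e₁) = J(e₂) = 0; moreover J² = 0. -/

import Mathlib

variable {V : Type*} [AddCommGroup V] [Module ℝ V]

/-- The Leibnizator L(u,v,w) := [u, v∘w] - [u,v]∘w - v∘[u,w]. -/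
def Leib (mul br : V →ₗ[ℝ] V →ₗ[ℝ] V) (u v w : V) : V :=
  br u (mul v w) - mul (br u v) w - mul v (br u w)

private lemma self_neg_zero {x : V} (h : x = -x) : x = 0 := by
  have h2 : (2:ℝ) • x = 0 := by
    rw [two_smul]; nth_rewrite 2 [h]; simp
  have := smul_eq_zero.mp h2
  simpa using this

/-- Case (2a) curvature: R(u,v)w := (1/2)(L(u,v,w) - L(v,u,w)) is non-zero,
every R(u,v) is a scalar multiple of the endomorphism J (J e₃ = e₂,
J e₁ = J e₂ = 0), and J² = 0. -/
theorem heisenberg_D1_holonomy (b : Module.Basis (Fin 3) ℝ V)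
    (mul br : V →ₗ[ℝ] V →ₗ[ℝ] V)
    (hcomm : ∀ u v, mul u v = mul v u)
    (hanti : ∀ u v, br u v = - br v u)
    (hb02 : br (b 0) (b 2) = b 1)
    (hb01 : br (b 0) (b 1) = 0) (hb12 : br (b 1) (b 2) = 0)
    (hm00 : mul (b 0) (b 0) = b 1) (hm22 : mul (b 2) (b 2) = b 2)
    (hm01 : mul (b 0) (b 1) = 0) (hm02 : mul (b 0) (b 2) = 0)
    (hm11 : mul (b 1) (b 1) = 0) (hm12 : mul (b 1) (b 2) = 0)
    (J : V →ₗ[ℝ] V)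
    (hJ2 : J (b 2) = b 1) (hJ0 : J (b 0) = 0) (hJ1 : J (b 1) = 0) :
    (2⁻¹ : ℝ) • (Leib mul br (b 0) (b 2) (b 2) - Leib mul br (b 2) (b 0) (b 2))
        = (2⁻¹ : ℝ) • b 1 ∧
    (2⁻¹ : ℝ) • b 1 ≠ 0 ∧
    (∀ u v, ∃ c : ℝ, ∀ w,
      (2⁻¹ : ℝ) • (Leib mul br u v w - Leib mul br v u w) = c • J w) ∧
    J ∘ₗ J = 0 := by
  -- derived bracket values
  have hb10 : br (b 1) (b 0) = 0 := by rw [hanti, hb01, neg_zero]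
  have hb20 : br (b 2) (b 0) = - b 1 := by rw [hanti, hb02]
  have hb21 : br (b 2) (b 1) = 0 := by rw [hanti, hb12, neg_zero]
  have hb00 : br (b 0) (b 0) = 0 := self_neg_zero (hanti _ _)
  have hb11 : br (b 1) (b 1) = 0 := self_neg_zero (hanti _ _)
  have hb22 : br (b 2) (b 2) = 0 := self_neg_zero (hanti _ _)
  have hm10 : mul (b 1) (b 0) = 0 := by rw [hcomm, hm01]
  have hm20 : mul (b 2) (b 0) = 0 := by rw [hcomm, hm02]
  have hm21 : mul (b 2) (b 1) = 0 := by rw [hcomm, hm12]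
  refine ⟨?_, ?_, ?_, ?_⟩
  · simp [Leib, hb02, hb20, hb22, hm22, hm12, hm21, hm02]
  · intro h
    have : (b 1 : V) = 0 := by
      have := smul_eq_zero.mp h
      simpa using this
    exact b.ne_zero 1 this
  · intro u v
    obtain ⟨u0, u1, u2, hu⟩ : ∃ x y z : ℝ, u = x • b 0 + y • b 1 + z • b 2 :=
      ⟨_, _, _, by rw [← b.sum_repr u, Fin.sum_univ_three]⟩
    obtain ⟨v0, v1, v2, hv⟩ : ∃ x y z : ℝ, v = x • b 0 + y • b 1 + z • b 2 :=
      ⟨_, _, _, by rw [← b.sum_repr v, Fin.sum_univ_three]⟩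
    refine ⟨2⁻¹ * (u0 * v2 - u2 * v0), ?_⟩
    intro w
    obtain ⟨w0, w1, w2, hw⟩ : ∃ x y z : ℝ, w = x • b 0 + y • b 1 + z • b 2 :=
      ⟨_, _, _, by rw [← b.sum_repr w, Fin.sum_univ_three]⟩
    rw [hu, hv, hw, Leib, Leib]
    simp only [map_add, map_smul, map_neg, neg_smul, neg_zero, neg_neg, LinearMap.add_apply, LinearMap.smul_apply, LinearMap.neg_apply, LinearMap.zero_apply,
      hb00, hb01, hb02, hb10, hb11, hb12, hb20, hb21, hb22,
      hm00, hm01, hm02, hm10, hm11, hm12, hm20, hm21, hm22,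
      hJ0, hJ1, hJ2, smul_zero, smul_neg, smul_smul,
      add_zero, zero_add, smul_add]
    module
  · apply b.ext
    intro i
    fin_cases i <;> simp [hJ0, hJ1, hJ2]
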